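/- Let R ≥ 2, and let Ψ be the conformal map of ℂ_{[-1,1]} onto the unit disk 𝔻 given by Ψ = -F∘G∘F with F(z)=(1-z)/(1+z) and G the principal square root. Then the image Ψ(∂𝔻_R ∩ ℂ_{[-1,1]}) is contained in the union of the ε-neighborhoods of the points i and -i, with ε = O(1/R). -/

import Mathlib

open Complex Set Metric

/-- The doubly slit plane `ℂ_{[-1,1]} = ℂ \ ((-∞,-1] ∪ [1,∞))`. -/
def slitPlane11 : Set ℂ :=
  {z : ℂ | z.im ≠ 0 ∨ (-1 < z.re ∧ z.re < 1)}

/-- The Möbius map `F(z) = (1-z)/(1+z)`. -/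
noncomputable def moebF (z : ℂ) : ℂ := (1 - z) / (1 + z)

/-- The principal branch of `√z` on `ℂ \ ℝ_{<0}` with `G(1) = 1`. -/
noncomputable def sqrtG (z : ℂ) : ℂ := z ^ ((1 : ℂ) / 2)

/-- The conformal map `Ψ = -F ∘ G ∘ F` of `ℂ_{[-1,1]}` onto the unit disk. -/
noncomputable def PsiUnif (z : ℂ) : ℂ := -(moebF (sqrtG (moebF z)))

/-- **`Ψ` compresses large circles toward `±i`.**
There is a constant `C` such that for all `R ≥ 2` and all `z ∈ ∂𝔻_R ∩ ℂ_{[-1,1]}`,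
the image `Ψ(z)` lies within `C/R` of `i` or of `-i`. -/
theorem PsiUnif_image_of_large_circle_near_pm_i :
    ∃ C : ℝ, 0 < C ∧
      ∀ R : ℝ, 2 ≤ R → ∀ z : ℂ, ‖z‖ = R → z ∈ slitPlane11 →
        min ‖PsiUnif z - Complex.I‖
            ‖PsiUnif z + Complex.I‖ ≤ C / R := by
  refine ⟨8, by norm_num, ?_⟩
  intro R hR z hz _
  have hR0 : (0:ℝ) < R := by linarith
  set u : ℂ := (1 - z) / (1 + z) with hu_def
  set w : ℂ := u ^ ((1:ℂ)/2) with hw_def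
  have h1z : (1:ℂ) + z ≠ 0 := by
    intro h
    have : z = -1 := by linear_combination h
    rw [this] at hz; simp at hz; linarith
  have h1z' : (1:ℂ) - z ≠ 0 := by
    intro h
    have : z = 1 := by linear_combination -h
    rw [this] at hz; simp at hz; linarith
  have hu0 : u ≠ 0 := div_ne_zero h1z' h1z
  have hw2 : w * w = u := by
    rw [hw_def, ← Complex.cpow_add _ _ hu0]
    norm_num
  -- Re w ≥ 0
  have hwre : 0 ≤ w.re := by
    rw [hw_def, Complex.cpow_def_of_ne_zero hu0, Complex.exp_re]
    apply mul_nonneg (Real.exp_pos _).le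
    have him : (Complex.log u * ((1:ℂ)/2)).im = u.arg / 2 := by
      simp [Complex.mul_im, Complex.log_im]
      ring
    rw [him]
    apply Real.cos_nonneg_of_mem_Icc
    constructor
    · have := Complex.neg_pi_lt_arg u; linarith
    · have := Complex.arg_le_pi u; linarith
  have h1w : (1:ℂ) + w ≠ 0 := by
    intro h
    have : (0:ℝ) ≤ -1 := by
      have := congrArg Complex.re h
      simp at this
      linarith [hwre]
    linarith
  have hpsi : PsiUnif z * (1 + w) = w - 1 := by
    have : PsiUnif z = -((1 - w) / (1 + w)) := rfl
    rw [this]; field_simp; ring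
  have hu : w * w * (1 + z) = 1 - z := by
    rw [hw2, hu_def]; field_simp
  have key : (PsiUnif z - I) * (PsiUnif z + I) * ((1 + z) * (1 + w)^2) = 4 := by
    linear_combination (PsiUnif z * (1 + w) + (w - 1)) * (1 + z) * hpsi + 2 * hu
      - (1 + w)^2 * (1 + z) * Complex.I_sq
  -- take absolute values
  have habs : ‖PsiUnif z - I‖ * ‖PsiUnif z + I‖
      * (‖1 + z‖ * ‖1 + w‖^2) = 4 := by
    have := congrArg (‖·‖) key
    simpa [norm_mul, norm_pow] using this
  have hA : R - 1 ≤ ‖1 + z‖ := by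
    have : ‖z‖ ≤ ‖1 + z‖ + 1 := by
      calc ‖z‖ = ‖(1 + z) + (-1)‖ := by ring_nf
      _ ≤ ‖1 + z‖ + ‖-1‖ := norm_add_le _ _
      _ = ‖1 + z‖ + 1 := by simp
    rw [hz] at this; linarith
  have hB : (1:ℝ) ≤ ‖1 + w‖ := by
    have h1 : (1:ℝ) ≤ (1 + w).re := by simp [Complex.add_re]; linarith
    calc (1:ℝ) ≤ (1 + w).re := h1
      _ ≤ |(1 + w).re| := le_abs_self _
      _ ≤ ‖1 + w‖ := Complex.abs_re_le_norm _
  -- max ≥ 1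
  have hmax : (1:ℝ) ≤ max (‖PsiUnif z - I‖) (‖PsiUnif z + I‖) := by
    have h2 : (2:ℝ) ≤ ‖PsiUnif z - I‖ + ‖PsiUnif z + I‖ := by
      have t := norm_add_le (PsiUnif z + I) (-(PsiUnif z - I))
      rw [norm_neg] at t
      rw [show (PsiUnif z + I) + -(PsiUnif z - I) = 2 * I by ring] at t
      simp only [norm_mul, Complex.norm_two, Complex.norm_I, mul_one] at t
      linarith
    rcases le_total (‖PsiUnif z - I‖) (‖PsiUnif z + I‖) with h | h
    · rw [max_eq_right h]; linarith
    · rw [max_eq_left h]; linarith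
  set m := min (‖PsiUnif z - I‖) (‖PsiUnif z + I‖) with hm
  set M := max (‖PsiUnif z - I‖) (‖PsiUnif z + I‖) with hM
  have hmM : m * M = ‖PsiUnif z - I‖ * ‖PsiUnif z + I‖ := by
    rw [hm, hM]; rcases le_total (‖PsiUnif z - I‖) (‖PsiUnif z + I‖) with h | h
    · rw [min_eq_left h, max_eq_right h]
    · rw [min_eq_right h, max_eq_left h]; ring
  have hm0 : 0 ≤ m := le_min (norm_nonneg _) (norm_nonneg _)
  have hprod : m * M * (‖1 + z‖ * ‖1 + w‖^2) = 4 := by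
    rw [hmM]; exact habs
  have hC : ‖1 + z‖ * ‖1 + w‖^2 ≥ R / 2 := by
    have h1 : R / 2 ≤ R - 1 := by linarith
    have h2 : (1:ℝ) ≤ ‖1 + w‖^2 := by nlinarith [hB]
    nlinarith [hA, norm_nonneg (1 + z)]
  have hmM8 : m * M ≤ 8 / R := by
    have hpos : (0:ℝ) < ‖1 + z‖ * ‖1 + w‖^2 := by nlinarith
    have hmM0 : 0 ≤ m * M := mul_nonneg hm0 (le_trans zero_le_one hmax)
    have h4 : m * M * (R / 2) ≤ 4 := by nlinarith [hprod, hC]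
    rw [le_div_iff₀ hR0]
    nlinarith
  calc m = m * 1 := by ring
    _ ≤ m * M := by nlinarith
    _ ≤ 8 / R := hmM8
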